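/- Let X = {x_1,...,x_n} ⊂ ℝ², α > 1, and for s' ∈ ℝ² define x_i(s') = s' + ‖s' - x_i‖^{α-2}(x_i - s') and X(s') = {x_i(s')}. Then a point s' minimises P_α(s, X) = Σ_i ‖s-x_i‖^α + max_i ‖s-x_i‖^α (over s) if and only if s' minimises P_2(s, X(s')) = Σ_i ‖s - x_i(s')‖² + max_i ‖s - x_i(s')‖² (over s). -/

import Mathlib

open Filter Topology Finset RealInnerProductSpace

section helpers
variable {E : Type*} [NormedAddCommGroup E] [InnerProductSpace ℝ E]

lemma quad_expand' (v d : E) (r : ℝ) :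
    ‖v + r • d‖ ^ 2 = ‖v‖ ^ 2 + 2 * ⟪v, d⟫ * r + ‖d‖ ^ 2 * r ^ 2 := by
  rw [norm_add_sq_real, real_inner_smul_right, norm_smul, Real.norm_eq_abs, mul_pow, sq_abs]
  ring

lemma hasDerivAt_norm_sq_line' (v d : E) :
    HasDerivAt (fun r : ℝ => ‖v + r • d‖ ^ 2) (2 * ⟪v, d⟫) 0 := by
  have h : HasDerivAt (fun r : ℝ => ‖v‖ ^ 2 + 2 * ⟪v, d⟫ * r + ‖d‖ ^ 2 * r ^ 2)
      (2 * ⟪v, d⟫) 0 := by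
    have h1 := ((hasDerivAt_id (0:ℝ)).const_mul (2 * ⟪v, d⟫)).const_add (‖v‖ ^ 2)
    have h2 := (hasDerivAt_pow 2 (0:ℝ)).const_mul (‖d‖ ^ 2)
    exact (h1.add h2).congr_deriv (by simp)
  exact h.congr_of_eventuallyEq (Filter.Eventually.of_forall fun r => quad_expand' v d r)

lemma hasDerivAt_norm_rpow_line' (v d : E) {α : ℝ} (hα : 1 < α) :
    HasDerivAt (fun r : ℝ => ‖v + r • d‖ ^ α) (α * ‖v‖ ^ (α - 2) * ⟪v, d⟫) 0 := by
  have hline : HasDerivAt (fun r : ℝ => v + r • d) d 0 := by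
    simpa using ((hasDerivAt_id (0:ℝ)).smul_const d).const_add v
  have := (hasFDerivAt_norm_rpow (v + (0:ℝ) • d) hα).comp_hasDerivAt 0 hline
  simpa [real_inner_smul_left, mul_assoc, Function.comp_def] using this

lemma norm_line_convex' (v d : E) {β : ℝ} (hβ : 1 ≤ β) {r : ℝ} (h0 : 0 ≤ r) (h1 : r ≤ 1) :
    ‖v + r • d‖ ^ β ≤ (1 - r) * ‖v‖ ^ β + r * ‖v + d‖ ^ β := by
  have hdecomp : v + r • d = (1 - r) • v + r • (v + d) := by
    rw [smul_add, sub_smul, one_smul]; abel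
  have hnorm : ‖v + r • d‖ ≤ (1 - r) * ‖v‖ + r * ‖v + d‖ := by
    rw [hdecomp]
    refine (norm_add_le _ _).trans ?_
    rw [norm_smul, norm_smul, Real.norm_eq_abs, Real.norm_eq_abs,
      abs_of_nonneg (by linarith), abs_of_nonneg h0]
  calc ‖v + r • d‖ ^ β ≤ ((1 - r) * ‖v‖ + r * ‖v + d‖) ^ β :=
        Real.rpow_le_rpow (norm_nonneg _) hnorm (by linarith)
    _ ≤ (1 - r) * ‖v‖ ^ β + r * ‖v + d‖ ^ β := by
        have := (convexOn_rpow hβ).2 (Set.mem_Ici.2 (norm_nonneg v))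
          (Set.mem_Ici.2 (norm_nonneg (v + d))) (show (0:ℝ) ≤ 1 - r by linarith) h0
          (show (1 - r) + r = 1 by ring)
        simpa using this

lemma norm_line_convex_sq' (v d : E) {r : ℝ} (h0 : 0 ≤ r) (h1 : r ≤ 1) :
    ‖v + r • d‖ ^ 2 ≤ (1 - r) * ‖v‖ ^ 2 + r * ‖v + d‖ ^ 2 := by
  have h := quad_expand' v d r
  have h1' := quad_expand' v d 1
  rw [one_smul] at h1'
  rw [h, h1']
  nlinarith [sq_nonneg ‖d‖, mul_nonneg h0 (sub_nonneg.2 h1), sq_nonneg (1 - r)]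


open Filter Topology Finset

end helpers

lemma tendsto_slope_sum_sup' {n : ℕ} [NeZero n] (F : Fin n → ℝ → ℝ) (a : Fin n → ℝ)
    (S : Finset (Fin n)) (hS : S.Nonempty)
    (hd : ∀ i, HasDerivAt (F i) (a i) 0)
    (hSmax : ∀ i ∈ S, ∀ j, F j 0 ≤ F i 0)
    (hmaxS : ∀ i, (∀ j, F j 0 ≤ F i 0) → i ∈ S) :
    Tendsto (fun r => ((∑ i, F i r + univ.sup' univ_nonempty (F · r))
        - (∑ i, F i 0 + univ.sup' univ_nonempty (F · 0))) / r)
      (𝓝[>] (0:ℝ)) (𝓝 (∑ i, a i + S.sup' hS a)) := by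
  set M := univ.sup' univ_nonempty (F · 0) with hM
  set D := S.sup' hS a with hD
  obtain ⟨i₀, hi₀S, hi₀⟩ := Finset.exists_mem_eq_sup' hS a
  have hDa : D = a i₀ := hi₀
  have hFM : ∀ i ∈ S, F i 0 = M :=
    fun i hi => le_antisymm (Finset.le_sup' (F · 0) (mem_univ i))
      (Finset.sup'_le _ _ fun j _ => hSmax i hi j)
  have hFi₀ : F i₀ 0 = M := hFM i₀ hi₀S
  have hlt : ∀ i, i ∉ S → F i 0 < M := by
    intro i hi
    rcases lt_or_ge (F i 0) M with h | h
    · exact h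
    · exact absurd (hmaxS i fun j => (Finset.le_sup' (F · 0) (mem_univ j)).trans h) hi
  rw [Metric.tendsto_nhds]
  intro ε hε
  set δ := ε / (n + 3) with hδdef
  have hδ : 0 < δ := by positivity
  have E1 : ∀ᶠ r in 𝓝[>] (0:ℝ), ∀ i, |(F i r - F i 0) / r - a i| < δ := by
    rw [Filter.eventually_all]
    intro i
    have h2 : Tendsto (fun r => (F i r - F i 0) / r) (𝓝[≠] (0:ℝ)) (𝓝 (a i)) := by
      have h := hasDerivAt_iff_tendsto_slope.1 (hd i)
      exact h.congr fun r => by rw [slope_def_field, sub_zero]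
    have h3 : Tendsto (fun r => (F i r - F i 0) / r) (𝓝[>] (0:ℝ)) (𝓝 (a i)) :=
      h2.mono_left (nhdsWithin_mono _ fun z hz => ne_of_gt hz)
    filter_upwards [Metric.tendsto_nhds.1 h3 δ hδ] with r hr
    simpa [Real.dist_eq] using hr
  have E3 : ∀ᶠ r in 𝓝[>] (0:ℝ), ∀ i, i ∉ S → r * (a i - (D + δ)) < M - F i 0 := by
    rw [Filter.eventually_all]
    intro i
    by_cases hiS : i ∈ S
    · exact Filter.Eventually.of_forall fun r h => (h hiS).elim
    · have hpos : 0 < M - F i 0 := sub_pos.2 (hlt i hiS)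
      have ht : Tendsto (fun r : ℝ => r * (a i - (D + δ))) (𝓝[>] (0:ℝ)) (𝓝 0) := by
        have h0 : Tendsto (fun r : ℝ => r) (𝓝 (0:ℝ)) (𝓝 (0:ℝ)) := tendsto_id
        have h1 := h0.mul_const (a i - (D + δ))
        rw [zero_mul] at h1
        exact h1.mono_left nhdsWithin_le_nhds
      filter_upwards [ht.eventually_lt_const hpos] with r hr _
      exact hr
  filter_upwards [E1, E3, self_mem_nhdsWithin] with r h1 h3 hr
  have hr0 : (0:ℝ) < r := hr
  have hrne : r ≠ 0 := ne_of_gt hr0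
  rw [Real.dist_eq]
  -- decompose the slope
  have hsplit : ((∑ i, F i r + univ.sup' univ_nonempty (F · r)) - (∑ i, F i 0 + M)) / r
      = (∑ i, (F i r - F i 0) / r) + (univ.sup' univ_nonempty (F · r) - M) / r := by
    rw [← Finset.sum_div, Finset.sum_sub_distrib]
    ring
  rw [hsplit]
  -- bound for the sum part
  have hsum : |(∑ i, (F i r - F i 0) / r) - ∑ i, a i| ≤ n * δ := by
    rw [← Finset.sum_sub_distrib]
    calc |∑ i, ((F i r - F i 0) / r - a i)| ≤ ∑ i, |(F i r - F i 0) / r - a i| :=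
          Finset.abs_sum_le_sum_abs _ _
      _ ≤ ∑ _i : Fin n, δ := Finset.sum_le_sum fun i _ => (h1 i).le
      _ = n * δ := by simp [mul_comm]
  -- bounds for the sup part
  have hup : univ.sup' univ_nonempty (F · r) ≤ M + r * (D + 2 * δ) := by
    apply Finset.sup'_le
    intro i _
    have hσ := (abs_lt.1 (h1 i)).2
    have hFir : F i r ≤ F i 0 + r * (a i + δ) := by
      have := (div_le_iff₀ hr0).1 (by linarith : (F i r - F i 0) / r ≤ a i + δ)
      linarith
    by_cases hiS : i ∈ S
    · have haD : a i ≤ D := Finset.le_sup' a hiS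
      have := hFM i hiS
      nlinarith
    · have := h3 i hiS
      nlinarith
  have hlow : M + r * (D - δ) ≤ univ.sup' univ_nonempty (F · r) := by
    have hσ := (abs_lt.1 (h1 i₀)).1
    have : F i₀ 0 + r * (a i₀ - δ) ≤ F i₀ r := by
      have := (le_div_iff₀ hr0).1 (by linarith : a i₀ - δ ≤ (F i₀ r - F i₀ 0) / r)
      linarith
    calc M + r * (D - δ) = F i₀ 0 + r * (a i₀ - δ) := by rw [hFi₀, hDa]
      _ ≤ F i₀ r := this
      _ ≤ univ.sup' univ_nonempty (F · r) := Finset.le_sup' (fun j => F j r) (mem_univ i₀)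
  have hsup : |(univ.sup' univ_nonempty (F · r) - M) / r - D| ≤ 2 * δ := by
    rw [abs_le]
    constructor
    · rw [le_sub_iff_add_le, le_div_iff₀ hr0]
      nlinarith
    · rw [sub_le_iff_le_add, div_le_iff₀ hr0]
      nlinarith
  have htot : |((∑ i, (F i r - F i 0) / r) + (univ.sup' univ_nonempty (F · r) - M) / r)
      - (∑ i, a i + D)| ≤ n * δ + 2 * δ := by
    have := abs_add_le ((∑ i, (F i r - F i 0) / r) - ∑ i, a i)
      ((univ.sup' univ_nonempty (F · r) - M) / r - D)
    calc |((∑ i, (F i r - F i 0) / r) + (univ.sup' univ_nonempty (F · r) - M) / r)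
        - (∑ i, a i + D)|
        = |((∑ i, (F i r - F i 0) / r) - ∑ i, a i)
          + ((univ.sup' univ_nonempty (F · r) - M) / r - D)| := by congr 1; ring
      _ ≤ _ := this
      _ ≤ n * δ + 2 * δ := add_le_add hsum hsup
  have hfinal : (n : ℝ) * δ + 2 * δ < ε := by
    have hn3 : (0:ℝ) < (n:ℝ) + 3 := by positivity
    have key : ((n:ℝ) + 2) * (ε / ((n:ℝ) + 3)) < ε := by
      rw [mul_div_assoc', div_lt_iff₀ hn3]
      nlinarith [Nat.cast_nonneg (α := ℝ) n]
    calc (n:ℝ) * δ + 2 * δ = ((n:ℝ) + 2) * (ε / ((n:ℝ) + 3)) := by rw [hδdef]; ring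
      _ < ε := key
  exact lt_of_le_of_lt htot hfinal

lemma sup'_const_mul' {n : ℕ} {S : Finset (Fin n)} (hS : S.Nonempty) {k : ℝ} (hk : 0 ≤ k)
    (a : Fin n → ℝ) : S.sup' hS (fun i => k * a i) = k * S.sup' hS a := by
  obtain ⟨i₀, hi₀, h⟩ := Finset.exists_mem_eq_sup' hS a
  refine le_antisymm (Finset.sup'_le _ _ fun i hi =>
    mul_le_mul_of_nonneg_left (Finset.le_sup' a hi) hk) ?_
  rw [h]
  exact Finset.le_sup' (fun i => k * a i) hi₀

lemma min_imp_L_nonneg' {n : ℕ} [NeZero n] (F : Fin n → ℝ → ℝ) (a : Fin n → ℝ)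
    (S : Finset (Fin n)) (hS : S.Nonempty)
    (hd : ∀ i, HasDerivAt (F i) (a i) 0)
    (hSmax : ∀ i ∈ S, ∀ j, F j 0 ≤ F i 0)
    (hmaxS : ∀ i, (∀ j, F j 0 ≤ F i 0) → i ∈ S)
    (hmin : ∀ r : ℝ, (∑ i, F i 0 + univ.sup' univ_nonempty (F · 0))
        ≤ ∑ i, F i r + univ.sup' univ_nonempty (F · r)) :
    0 ≤ ∑ i, a i + S.sup' hS a := by
  refine ge_of_tendsto (tendsto_slope_sum_sup' F a S hS hd hSmax hmaxS) ?_
  filter_upwards [self_mem_nhdsWithin] with r hr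
  exact div_nonneg (sub_nonneg.2 (hmin r)) (le_of_lt hr)

lemma L_nonneg_imp_le' {n : ℕ} [NeZero n] (F : Fin n → ℝ → ℝ) (a : Fin n → ℝ)
    (S : Finset (Fin n)) (hS : S.Nonempty)
    (hd : ∀ i, HasDerivAt (F i) (a i) 0)
    (hSmax : ∀ i ∈ S, ∀ j, F j 0 ≤ F i 0)
    (hmaxS : ∀ i, (∀ j, F j 0 ≤ F i 0) → i ∈ S)
    (hconv : ∀ i, ∀ r : ℝ, 0 ≤ r → r ≤ 1 → F i r ≤ (1 - r) * F i 0 + r * F i 1)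
    (hL : 0 ≤ ∑ i, a i + S.sup' hS a) :
    (∑ i, F i 0 + univ.sup' univ_nonempty (F · 0))
      ≤ ∑ i, F i 1 + univ.sup' univ_nonempty (F · 1) := by
  set P0 := ∑ i, F i 0 + univ.sup' univ_nonempty (F · 0) with hP0
  set P1 := ∑ i, F i 1 + univ.sup' univ_nonempty (F · 1) with hP1
  have key : ∑ i, a i + S.sup' hS a ≤ P1 - P0 := by
    refine le_of_tendsto (tendsto_slope_sum_sup' F a S hS hd hSmax hmaxS) ?_
    filter_upwards [Ioo_mem_nhdsGT (zero_lt_one (α := ℝ))] with r hr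
    obtain ⟨hr0, hr1⟩ := hr
    have hPr : (∑ i, F i r + univ.sup' univ_nonempty (F · r)) ≤ (1 - r) * P0 + r * P1 := by
      have hsum : ∑ i, F i r ≤ (1 - r) * ∑ i, F i 0 + r * ∑ i, F i 1 := by
        rw [Finset.mul_sum, Finset.mul_sum, ← Finset.sum_add_distrib]
        exact Finset.sum_le_sum fun i _ => hconv i r hr0.le hr1.le
      have hsup : univ.sup' univ_nonempty (F · r)
          ≤ (1 - r) * univ.sup' univ_nonempty (F · 0) + r * univ.sup' univ_nonempty (F · 1) := by
        apply Finset.sup'_le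
        intro i _
        refine (hconv i r hr0.le hr1.le).trans ?_
        have h0 : F i 0 ≤ univ.sup' univ_nonempty (F · 0) := Finset.le_sup' (F · 0) (mem_univ i)
        have h1 : F i 1 ≤ univ.sup' univ_nonempty (F · 1) := Finset.le_sup' (F · 1) (mem_univ i)
        have c0 : (0:ℝ) ≤ 1 - r := by linarith
        nlinarith
      rw [hP0, hP1]
      nlinarith
    rw [div_le_iff₀ hr0]
    nlinarith
  linarith

theorem alpha_minPower_iff_quadratic_on_transformed
    {n : ℕ} [NeZero n] (x : Fin n → EuclideanSpace ℝ (Fin 2)) (α : ℝ) (hα : 1 < α)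
    (s' : EuclideanSpace ℝ (Fin 2))
    (y : Fin n → EuclideanSpace ℝ (Fin 2))
    (hy : ∀ i, y i = s' + ‖s' - x i‖ ^ (α - 2) • (x i - s'))
    (Pα P₂ : EuclideanSpace ℝ (Fin 2) → ℝ)
    (hPα : ∀ s, Pα s = (∑ i, ‖s - x i‖ ^ α) +
      Finset.univ.sup' Finset.univ_nonempty (fun i => ‖s - x i‖ ^ α))
    (hP₂ : ∀ s, P₂ s = (∑ i, ‖s - y i‖ ^ 2) +
      Finset.univ.sup' Finset.univ_nonempty (fun i => ‖s - y i‖ ^ 2)) :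
    (∀ t, Pα s' ≤ Pα t) ↔ (∀ t, P₂ s' ≤ P₂ t) := by
  classical
  have hα0 : (0:ℝ) < α := by linarith
  have hα1 : (0:ℝ) < α - 1 := by linarith
  have hk : (0:ℝ) < 2 / α := by positivity
  -- transformed displacement vectors
  have hw : ∀ i, s' - y i = ‖s' - x i‖ ^ (α - 2) • (s' - x i) := by
    intro i
    rw [hy i]
    have h1 : s' - (s' + ‖s' - x i‖ ^ (α - 2) • (x i - s'))
        = -(‖s' - x i‖ ^ (α - 2) • (x i - s')) := by abel
    rw [h1, ← smul_neg, neg_sub]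
  have hny : ∀ i, ‖s' - y i‖ = ‖s' - x i‖ ^ (α - 1) := by
    intro i
    rw [hw i, norm_smul, Real.norm_eq_abs,
      abs_of_nonneg (Real.rpow_nonneg (norm_nonneg _) _)]
    rcases eq_or_ne ‖s' - x i‖ 0 with h | h
    · rw [h, Real.zero_rpow (ne_of_gt hα1), mul_zero]
    · have hp : 0 < ‖s' - x i‖ := lt_of_le_of_ne (norm_nonneg _) (Ne.symm h)
      calc ‖s' - x i‖ ^ (α - 2) * ‖s' - x i‖
          = ‖s' - x i‖ ^ (α - 2) * ‖s' - x i‖ ^ (1:ℝ) := by rw [Real.rpow_one]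
        _ = ‖s' - x i‖ ^ (α - 2 + 1) := (Real.rpow_add hp _ _).symm
        _ = ‖s' - x i‖ ^ (α - 1) := by ring_nf
  have hny2 : ∀ i, (‖s' - y i‖:ℝ) ^ 2 = ‖s' - x i‖ ^ (2 * (α - 1)) := by
    intro i
    rw [hny i, ← Real.rpow_natCast (‖s' - x i‖ ^ (α - 1)) 2,
      ← Real.rpow_mul (norm_nonneg _)]
    norm_num [mul_comm]
  -- the argmax set
  set S : Finset (Fin n) := Finset.univ.filter (fun i => ∀ j, ‖s' - x j‖ ≤ ‖s' - x i‖)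
    with hSdef
  have hmemS : ∀ i, i ∈ S ↔ ∀ j, ‖s' - x j‖ ≤ ‖s' - x i‖ := by
    intro i; simp [hSdef]
  have hS : S.Nonempty := by
    obtain ⟨i, -, hmax⟩ := Finset.exists_max_image Finset.univ (fun i => ‖s' - x i‖)
      Finset.univ_nonempty
    exact ⟨i, (hmemS i).2 fun j => hmax j (Finset.mem_univ j)⟩
  -- derivative data
  have hderivα : ∀ (d : EuclideanSpace ℝ (Fin 2)) i,
      HasDerivAt (fun r : ℝ => ‖(s' - x i) + r • d‖ ^ α)
        (α * ‖s' - x i‖ ^ (α - 2) * ⟪s' - x i, d⟫) 0 :=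
    fun d i => hasDerivAt_norm_rpow_line' _ d hα
  have hb_eq : ∀ (d : EuclideanSpace ℝ (Fin 2)) i,
      (2:ℝ) * ⟪s' - y i, d⟫ = (2 / α) * (α * ‖s' - x i‖ ^ (α - 2) * ⟪s' - x i, d⟫) := by
    intro d i
    rw [hw i, real_inner_smul_left]
    field_simp
  have hderiv₂ : ∀ (d : EuclideanSpace ℝ (Fin 2)) i,
      HasDerivAt (fun r : ℝ => ‖(s' - y i) + r • d‖ ^ 2)
        ((2 / α) * (α * ‖s' - x i‖ ^ (α - 2) * ⟪s' - x i, d⟫)) 0 := by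
    intro d i
    have h := hasDerivAt_norm_sq_line' (s' - y i) d
    rwa [hb_eq d i] at h
  -- argmax conditions for the α-family
  have hsmaxα : ∀ (d : EuclideanSpace ℝ (Fin 2)), ∀ i ∈ S, ∀ j,
      ‖(s' - x j) + (0:ℝ) • d‖ ^ α ≤ ‖(s' - x i) + (0:ℝ) • d‖ ^ α := by
    intro d i hi j
    simp only [zero_smul, add_zero]
    exact Real.rpow_le_rpow (norm_nonneg _) ((hmemS i).1 hi j) hα0.le
  have hmaxSα : ∀ (d : EuclideanSpace ℝ (Fin 2)) i,
      (∀ j, ‖(s' - x j) + (0:ℝ) • d‖ ^ α ≤ ‖(s' - x i) + (0:ℝ) • d‖ ^ α) → i ∈ S := by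
    intro d i h
    refine (hmemS i).2 fun j => ?_
    have hj := h j
    simp only [zero_smul, add_zero] at hj
    exact (Real.rpow_le_rpow_iff (norm_nonneg _) (norm_nonneg _) hα0).1 hj
  -- argmax conditions for the quadratic family
  have hsq_iff : ∀ i j, ‖s' - y j‖ ^ 2 ≤ ‖s' - y i‖ ^ 2 ↔ ‖s' - x j‖ ≤ ‖s' - x i‖ := by
    intro i j
    rw [hny2 i, hny2 j]
    exact Real.rpow_le_rpow_iff (norm_nonneg _) (norm_nonneg _) (by linarith)
  have hsmax₂ : ∀ (d : EuclideanSpace ℝ (Fin 2)), ∀ i ∈ S, ∀ j,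
      ‖(s' - y j) + (0:ℝ) • d‖ ^ 2 ≤ ‖(s' - y i) + (0:ℝ) • d‖ ^ 2 := by
    intro d i hi j
    simp only [zero_smul, add_zero]
    exact (hsq_iff i j).2 ((hmemS i).1 hi j)
  have hmaxS₂ : ∀ (d : EuclideanSpace ℝ (Fin 2)) i,
      (∀ j, ‖(s' - y j) + (0:ℝ) • d‖ ^ 2 ≤ ‖(s' - y i) + (0:ℝ) • d‖ ^ 2) → i ∈ S := by
    intro d i h
    refine (hmemS i).2 fun j => ?_
    have hj := h j
    simp only [zero_smul, add_zero] at hj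
    exact (hsq_iff i j).1 hj
  -- rewriting the objectives along lines
  have hPαline : ∀ (d : EuclideanSpace ℝ (Fin 2)) (r : ℝ),
      Pα (s' + r • d) = ∑ i, ‖(s' - x i) + r • d‖ ^ α +
        Finset.univ.sup' Finset.univ_nonempty (fun i => ‖(s' - x i) + r • d‖ ^ α) := by
    intro d r
    rw [hPα]
    have harg : ∀ i, s' + r • d - x i = (s' - x i) + r • d := fun i => by abel
    simp_rw [harg]
  have hP₂line : ∀ (d : EuclideanSpace ℝ (Fin 2)) (r : ℝ),
      P₂ (s' + r • d) = ∑ i, ‖(s' - y i) + r • d‖ ^ 2 +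
        Finset.univ.sup' Finset.univ_nonempty (fun i => ‖(s' - y i) + r • d‖ ^ 2) := by
    intro d r
    rw [hP₂]
    have harg : ∀ i, s' + r • d - y i = (s' - y i) + r • d := fun i => by abel
    simp_rw [harg]
  -- the scaling identity between the two "L"-values
  have hLscale : ∀ (d : EuclideanSpace ℝ (Fin 2)),
      (∑ i, (2 / α) * (α * ‖s' - x i‖ ^ (α - 2) * ⟪s' - x i, d⟫)
        + S.sup' hS (fun i => (2 / α) * (α * ‖s' - x i‖ ^ (α - 2) * ⟪s' - x i, d⟫)))
      = (2 / α) * (∑ i, α * ‖s' - x i‖ ^ (α - 2) * ⟪s' - x i, d⟫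
        + S.sup' hS (fun i => α * ‖s' - x i‖ ^ (α - 2) * ⟪s' - x i, d⟫)) := by
    intro d
    rw [sup'_const_mul' hS hk.le, ← Finset.mul_sum, mul_add]
  -- convexity data
  have hconvα : ∀ (d : EuclideanSpace ℝ (Fin 2)) i (r : ℝ), 0 ≤ r → r ≤ 1 →
      ‖(s' - x i) + r • d‖ ^ α ≤ (1 - r) * ‖(s' - x i) + (0:ℝ) • d‖ ^ α
        + r * ‖(s' - x i) + (1:ℝ) • d‖ ^ α := by
    intro d i r h0 h1
    simp only [zero_smul, add_zero, one_smul]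
    exact norm_line_convex' _ d hα.le h0 h1
  have hconv₂ : ∀ (d : EuclideanSpace ℝ (Fin 2)) i (r : ℝ), 0 ≤ r → r ≤ 1 →
      ‖(s' - y i) + r • d‖ ^ 2 ≤ (1 - r) * ‖(s' - y i) + (0:ℝ) • d‖ ^ 2
        + r * ‖(s' - y i) + (1:ℝ) • d‖ ^ 2 := by
    intro d i r h0 h1
    simp only [zero_smul, add_zero, one_smul]
    exact norm_line_convex_sq' _ d h0 h1
  constructor
  · -- α-minimiser → quadratic minimiser
    intro hmin t
    set d : EuclideanSpace ℝ (Fin 2) := t - s' with hd_def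
    have hLα : 0 ≤ ∑ i, α * ‖s' - x i‖ ^ (α - 2) * ⟪s' - x i, d⟫
        + S.sup' hS (fun i => α * ‖s' - x i‖ ^ (α - 2) * ⟪s' - x i, d⟫) := by
      refine min_imp_L_nonneg' (fun i r => ‖(s' - x i) + r • d‖ ^ α)
        (fun i => α * ‖s' - x i‖ ^ (α - 2) * ⟪s' - x i, d⟫) S hS
        (hderivα d) (hsmaxα d) (hmaxSα d) ?_
      intro r
      rw [← hPαline d 0, ← hPαline d r]
      simp only [zero_smul, add_zero]
      exact hmin _
    have hL₂ : 0 ≤ ∑ i, (2 / α) * (α * ‖s' - x i‖ ^ (α - 2) * ⟪s' - x i, d⟫)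
        + S.sup' hS (fun i => (2 / α) * (α * ‖s' - x i‖ ^ (α - 2) * ⟪s' - x i, d⟫)) := by
      rw [hLscale d]
      exact mul_nonneg hk.le hLα
    have hfin := L_nonneg_imp_le' (fun i r => ‖(s' - y i) + r • d‖ ^ 2)
      (fun i => (2 / α) * (α * ‖s' - x i‖ ^ (α - 2) * ⟪s' - x i, d⟫)) S hS
      (hderiv₂ d) (hsmax₂ d) (hmaxS₂ d) (hconv₂ d) hL₂
    rw [← hP₂line d 0, ← hP₂line d 1] at hfin
    simp only [zero_smul, add_zero, one_smul] at hfin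
    rwa [hd_def, add_sub_cancel] at hfin
  · -- quadratic minimiser → α-minimiser
    intro hmin t
    set d : EuclideanSpace ℝ (Fin 2) := t - s' with hd_def
    have hL₂ : 0 ≤ ∑ i, (2 / α) * (α * ‖s' - x i‖ ^ (α - 2) * ⟪s' - x i, d⟫)
        + S.sup' hS (fun i => (2 / α) * (α * ‖s' - x i‖ ^ (α - 2) * ⟪s' - x i, d⟫)) := by
      refine min_imp_L_nonneg' (fun i r => ‖(s' - y i) + r • d‖ ^ 2)
        (fun i => (2 / α) * (α * ‖s' - x i‖ ^ (α - 2) * ⟪s' - x i, d⟫)) S hS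
        (hderiv₂ d) (hsmax₂ d) (hmaxS₂ d) ?_
      intro r
      rw [← hP₂line d 0, ← hP₂line d r]
      simp only [zero_smul, add_zero]
      exact hmin _
    have hLα : 0 ≤ ∑ i, α * ‖s' - x i‖ ^ (α - 2) * ⟪s' - x i, d⟫
        + S.sup' hS (fun i => α * ‖s' - x i‖ ^ (α - 2) * ⟪s' - x i, d⟫) := by
      rw [hLscale d] at hL₂
      exact nonneg_of_mul_nonneg_right hL₂ hk
    have hfin := L_nonneg_imp_le' (fun i r => ‖(s' - x i) + r • d‖ ^ α)
      (fun i => α * ‖s' - x i‖ ^ (α - 2) * ⟪s' - x i, d⟫) S hS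
      (hderivα d) (hsmaxα d) (hmaxSα d) (hconvα d) hLα
    rw [← hPαline d 0, ← hPαline d 1] at hfin
    simp only [zero_smul, add_zero, one_smul] at hfin
    rwa [hd_def, add_sub_cancel] at hfin
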